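/- arXiv:1004.0964 — 6 statements merged into one kernel-verified Lean document; each statement's English description precedes it below -/
import Mathlib

section
/- Let A be a commutative ring and let α₁, …, αₙ ∈ A satisfy αᵢ² = 0 for all i. Then the product, over all nonempty subsets S ⊆ {1, …, n}, of the factors (1 + (−1)^{|S|−1} · (|S|−1)! · ∏_{i∈S} αᵢ) equals 1 + α₁ + ⋯ + αₙ. -/
open Finset

private lemma sq_zero_prod {A : Type*} [CommRing A] {β : A} (hβ : β ^ 2 = 0)
    {σ : Type*} [DecidableEq σ] (u : Finset σ) (g : σ → A) :
    ∏ T ∈ u, (1 + β * g T) = 1 + β * ∑ T ∈ u, g T := by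
  induction u using Finset.induction_on with
  | empty => simp
  | @insert a u ha ih =>
      rw [Finset.prod_insert ha, ih, Finset.sum_insert ha]
      linear_combination (g a * ∑ T ∈ u, g T) * hβ

private lemma F_mul {A : Type*} [CommRing A] {ι : Type*} [DecidableEq ι]
    (α : ι → A) (s : Finset ι) (hs : ∀ i ∈ s, α i ^ 2 = 0) (c : ℕ → A) :
    (1 + ∑ i ∈ s, α i) * ∑ T ∈ s.powerset, c T.card * ∏ i ∈ T, α i
      = ∑ T ∈ s.powerset, (c T.card + T.card * c (T.card - 1)) * ∏ i ∈ T, α i := by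
  induction s using Finset.induction_on generalizing c with
  | empty => simp
  | @insert a s ha ih =>
      have hβ : α a ^ 2 = 0 := hs a (mem_insert_self a s)
      have hs' : ∀ i ∈ s, α i ^ 2 = 0 := fun i hi => hs i (mem_insert_of_mem hi)
      have hnot : ∀ T ∈ s.powerset, a ∉ T := fun T hT h => ha (mem_powerset.1 hT h)
      have h1 : ∑ T ∈ s.powerset, c (insert a T).card * ∏ i ∈ insert a T, α i
          = α a * ∑ T ∈ s.powerset, c (T.card + 1) * ∏ i ∈ T, α i := by
        rw [Finset.mul_sum]
        refine Finset.sum_congr rfl fun T hT => ?_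
        rw [Finset.card_insert_of_notMem (hnot T hT), Finset.prod_insert (hnot T hT)]
        ring
      have h2 : ∑ T ∈ s.powerset,
            (c (insert a T).card + ((insert a T).card : A) * c ((insert a T).card - 1))
              * ∏ i ∈ insert a T, α i
          = α a * ∑ T ∈ s.powerset,
              ((c (T.card + 1) + ((T.card : A) + 1) * c T.card)) * ∏ i ∈ T, α i := by
        rw [Finset.mul_sum]
        refine Finset.sum_congr rfl fun T hT => ?_
        rw [Finset.card_insert_of_notMem (hnot T hT), Finset.prod_insert (hnot T hT)]
        push_cast
        ring
      have e2 := ih hs' (fun k => c (k + 1))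
      beta_reduce at e2
      have h3 : ∑ T ∈ s.powerset,
            ((c (T.card + 1) + ((T.card : A) + 1) * c T.card)) * ∏ i ∈ T, α i
          = (∑ T ∈ s.powerset, c T.card * ∏ i ∈ T, α i)
            + ∑ T ∈ s.powerset, (c (T.card + 1) + (T.card : A) * c (T.card - 1 + 1))
                * ∏ i ∈ T, α i := by
        rw [← Finset.sum_add_distrib]
        refine Finset.sum_congr rfl fun T hT => ?_
        cases hc : T.card with
        | zero => push_cast [hc]; ring
        | succ k => push_cast [hc]; ring
      rw [Finset.sum_powerset_insert ha, Finset.sum_powerset_insert ha,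
        Finset.sum_insert ha, h1, h2, h3]
      have e1 := ih hs' c
      linear_combination e1 + α a * e2
        + (∑ T ∈ s.powerset, c (T.card + 1) * ∏ i ∈ T, α i) * hβ

private lemma inv_lemma {A : Type*} [CommRing A] {ι : Type*} [DecidableEq ι]
    (α : ι → A) (s : Finset ι) (hs : ∀ i ∈ s, α i ^ 2 = 0) :
    (1 + ∑ i ∈ s, α i)
      * ∑ T ∈ s.powerset, (-1 : A) ^ T.card * (T.card.factorial : A) * ∏ i ∈ T, α i
      = 1 := by
  have h := F_mul α s hs (fun k => (-1 : A) ^ k * (k.factorial : A))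
  beta_reduce at h
  rw [show (∑ T ∈ s.powerset, (-1 : A) ^ T.card * (T.card.factorial : A) * ∏ i ∈ T, α i)
      = ∑ T ∈ s.powerset, ((-1 : A) ^ T.card * (T.card.factorial : A)) * ∏ i ∈ T, α i from
    Finset.sum_congr rfl fun T _ => by ring, h]
  rw [Finset.sum_eq_single_of_mem ∅ (Finset.empty_mem_powerset s)]
  · simp
  · intro T _ hT
    obtain ⟨k, hk⟩ := Nat.exists_eq_succ_of_ne_zero
      (Finset.card_ne_zero.2 (Finset.nonempty_of_ne_empty hT))
    rw [hk]
    push_cast [Nat.factorial_succ, pow_succ]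
    ring_nf

private lemma main_aux {A : Type*} [CommRing A] {ι : Type*} [DecidableEq ι]
    (α : ι → A) (s : Finset ι) (hs : ∀ i ∈ s, α i ^ 2 = 0) :
    ∏ S ∈ s.powerset.filter (fun S => S.Nonempty),
      (1 + (-1 : A) ^ (S.card - 1) * (Nat.factorial (S.card - 1) : A) * ∏ i ∈ S, α i)
      = 1 + ∑ i ∈ s, α i := by
  induction s using Finset.induction_on with
  | empty => simp [Finset.filter_singleton, Finset.not_nonempty_empty]
  | @insert a s ha ih =>
      have hβ : α a ^ 2 = 0 := hs a (mem_insert_self a s)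
      have hs' : ∀ i ∈ s, α i ^ 2 = 0 := fun i hi => hs i (mem_insert_of_mem hi)
      have hnot : ∀ T ∈ s.powerset, a ∉ T := fun T hT h => ha (mem_powerset.1 hT h)
      have himg : (s.powerset.image (insert a)).filter (fun S => S.Nonempty)
          = s.powerset.image (insert a) := by
        refine Finset.filter_true_of_mem fun S hS => ?_
        obtain ⟨T, _, rfl⟩ := Finset.mem_image.1 hS
        exact Finset.insert_nonempty a T
      have hsplit : (insert a s).powerset.filter (fun S => S.Nonempty)
          = (s.powerset.filter fun S => S.Nonempty) ∪ s.powerset.image (insert a) := by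
        rw [Finset.powerset_insert, Finset.filter_union, himg]
      have hdisj : Disjoint (s.powerset.filter fun S => S.Nonempty)
          (s.powerset.image (insert a)) := by
        rw [Finset.disjoint_left]
        intro S hS hS'
        obtain ⟨T, _, rfl⟩ := Finset.mem_image.1 hS'
        exact (hnot _ (Finset.mem_filter.1 hS).1) (Finset.mem_insert_self a T)
      have hinj : ∀ T ∈ s.powerset, ∀ T' ∈ s.powerset, insert a T = insert a T' → T = T' := by
        intro T hT T' hT' h
        have he : ∀ U ∈ s.powerset, (insert a U).erase a = U := fun U hU =>
          Finset.erase_insert (hnot U hU)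
        rw [← he T hT, ← he T' hT', h]
      rw [hsplit, Finset.prod_union hdisj, Finset.prod_image hinj, ih hs']
      have hprod : ∏ T ∈ s.powerset,
          (1 + (-1 : A) ^ ((insert a T).card - 1)
            * (Nat.factorial ((insert a T).card - 1) : A) * ∏ i ∈ insert a T, α i)
          = ∏ T ∈ s.powerset,
            (1 + α a * ((-1 : A) ^ T.card * (T.card.factorial : A) * ∏ i ∈ T, α i)) := by
        refine Finset.prod_congr rfl fun T hT => ?_
        rw [Finset.card_insert_of_notMem (hnot T hT), Nat.add_sub_cancel,
          Finset.prod_insert (hnot T hT)]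
        ring
      rw [hprod, sq_zero_prod hβ, Finset.sum_insert ha]
      have hinv := inv_lemma α s hs'
      linear_combination (α a) * hinv

/-- Identity (4.2): for square-zero elements α₁,…,αₙ of a commutative ring,
the product over all nonempty subsets S of the factors
(1 + (−1)^{|S|−1}(|S|−1)!·∏_{i∈S} αᵢ) equals 1 + α₁ + ⋯ + αₙ. -/
theorem quotient_products_factorization_identity
    {A : Type*} [CommRing A] (n : ℕ) (α : Fin n → A)
    (hα : ∀ i, α i ^ 2 = 0) :
    ∏ S ∈ Finset.univ.filter (fun S : Finset (Fin n) => S.Nonempty),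
      (1 + (-1 : A) ^ (S.card - 1) * (Nat.factorial (S.card - 1) : A) * ∏ i ∈ S, α i)
      = 1 + ∑ i, α i := by
  have h := main_aux α Finset.univ (fun i _ => hα i)
  rwa [Finset.powerset_univ] at h
end

section
/- Let A be a commutative ring, let α₁, …, αₙ ∈ A satisfy αᵢ² = 0 for all i, and for each nonempty subset S ⊆ {1, …, n} let w_S ∈ A be given. Then there exist elements v_S ∈ A, one for each nonempty subset S ⊆ {1, …, n}, such that 1 + Σ_{∅≠S⊆{1,…,n}} w_S · ∏_{i∈S} αᵢ = ∏_{∅≠S⊆{1,…,n}} (1 + v_S · ∏_{i∈S} αᵢ). -/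
open Finset

private lemma prod_one_add_mul_sq_zero {A : Type*} [CommRing A] {x : A} (hx : x ^ 2 = 0)
    {ι : Type*} [DecidableEq ι] (t : Finset ι) (f : ι → A) :
    ∏ i ∈ t, (1 + f i * x) = 1 + (∑ i ∈ t, f i) * x := by
  induction t using Finset.induction_on with
  | empty => simp
  | @insert a t ha ih =>
      rw [Finset.prod_insert ha, ih, Finset.sum_insert ha]
      linear_combination (f a * ∑ i ∈ t, f i) * hx

private lemma prod_sq_zero {A : Type*} [CommRing A] {n : ℕ} {α : Fin n → A}
    (hα : ∀ i, α i ^ 2 = 0) {S : Finset (Fin n)} (hS : S.Nonempty) :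
    (∏ i ∈ S, α i) ^ 2 = 0 := by
  obtain ⟨i, hi⟩ := hS
  rw [← Finset.prod_pow]
  exact Finset.prod_eq_zero hi (hα i)

private lemma span_mul_mem {A : Type*} [CommRing A] {n : ℕ} {α : Fin n → A}
    (hα : ∀ i, α i ^ 2 = 0) (s : Finset (Fin n)) {x y : A}
    (hx : x ∈ Submodule.span A ((fun S : Finset (Fin n) => ∏ i ∈ S, α i) '' {S | S ⊆ s}))
    (hy : y ∈ Submodule.span A ((fun S : Finset (Fin n) => ∏ i ∈ S, α i) '' {S | S ⊆ s})) :
    x * y ∈ Submodule.span A ((fun S : Finset (Fin n) => ∏ i ∈ S, α i) '' {S | S ⊆ s}) := by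
  induction hx, hy using Submodule.span_induction₂ with
  | mem_mem x y hx hy =>
      obtain ⟨S, hS, rfl⟩ := hx
      obtain ⟨T, hT, rfl⟩ := hy
      by_cases hd : Disjoint S T
      · have : (∏ i ∈ S, α i) * ∏ i ∈ T, α i = ∏ i ∈ S ∪ T, α i :=
          (Finset.prod_union hd).symm
        rw [this]
        exact Submodule.subset_span ⟨S ∪ T, Finset.union_subset hS hT, rfl⟩
      · rw [Finset.not_disjoint_iff] at hd
        obtain ⟨i, hiS, hiT⟩ := hd
        have : (∏ i ∈ S, α i) * ∏ i ∈ T, α i = 0 := by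
          rw [← Finset.mul_prod_erase S α hiS, ← Finset.mul_prod_erase T α hiT]
          linear_combination ((∏ j ∈ S.erase i, α j) * ∏ j ∈ T.erase i, α j) * hα i
        rw [this]; exact Submodule.zero_mem _
  | zero_left y hy => simp
  | zero_right x hx => simp
  | add_left x y z hx hy hz h1 h2 => simpa [add_mul] using Submodule.add_mem _ h1 h2
  | add_right x y z hx hy hz h1 h2 => simpa [mul_add] using Submodule.add_mem _ h1 h2
  | smul_left r x y hx hy h =>
      have := Submodule.smul_mem _ r h
      rw [smul_eq_mul, ← mul_assoc] at this; exact this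
  | smul_right r x y hx hy h =>
      have := Submodule.smul_mem _ r h
      rw [smul_eq_mul, ← mul_left_comm] at this; exact this

private lemma span_extract {A : Type*} [CommRing A] {n : ℕ} {α : Fin n → A}
    (s : Finset (Fin n)) {x : A}
    (hx : x ∈ Submodule.span A ((fun S : Finset (Fin n) => ∏ i ∈ S, α i) '' {S | S ⊆ s})) :
    ∃ c : Finset (Fin n) → A, x = ∑ S ∈ s.powerset, c S * ∏ i ∈ S, α i := by
  induction hx using Submodule.span_induction with
  | mem x hx =>
      obtain ⟨S₀, hS₀, rfl⟩ := hx
      refine ⟨fun S => if S = S₀ then 1 else 0, ?_⟩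
      rw [Finset.sum_eq_single S₀]
      · simp
      · intro b _ hb; simp [hb]
      · intro h; exact absurd (Finset.mem_powerset.2 hS₀) h
  | zero => exact ⟨0, by simp⟩
  | add x y hx hy h1 h2 =>
      obtain ⟨c1, rfl⟩ := h1
      obtain ⟨c2, rfl⟩ := h2
      refine ⟨fun S => c1 S + c2 S, ?_⟩
      rw [← Finset.sum_add_distrib]
      apply Finset.sum_congr rfl; intros; ring
  | smul a x hx h =>
      obtain ⟨c, rfl⟩ := h
      refine ⟨fun S => a * c S, ?_⟩
      rw [smul_eq_mul, Finset.mul_sum]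
      apply Finset.sum_congr rfl; intros; ring

private lemma key_lemma {A : Type*} [CommRing A] {n : ℕ} (α : Fin n → A)
    (hα : ∀ i, α i ^ 2 = 0) (s : Finset (Fin n)) :
    ∀ w : Finset (Fin n) → A, ∃ v : Finset (Fin n) → A,
      1 + ∑ S ∈ s.powerset.filter (fun S => S.Nonempty), w S * ∏ i ∈ S, α i
        = ∏ S ∈ s.powerset.filter (fun S => S.Nonempty), (1 + v S * ∏ i ∈ S, α i) := by
  induction s using Finset.induction_on with
  | empty => intro w; exact ⟨w, by simp [Finset.filter_singleton]⟩
  | @insert a s ha ih =>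
    intro w
    obtain ⟨v', hv'⟩ := ih w
    set Q := Submodule.span A ((fun S : Finset (Fin n) => ∏ i ∈ S, α i) '' {S | S ⊆ s}) with hQ
    set N' := s.powerset.filter (fun S => S.Nonempty) with hN'
    -- subsets in N' are ⊆ s
    have hN'sub : ∀ S ∈ N', S ⊆ s ∧ S.Nonempty := by
      intro S hS
      rw [hN', Finset.mem_filter, Finset.mem_powerset] at hS
      exact hS
    -- decomposition of the index set
    have hdecomp : (insert a s).powerset.filter (fun S => S.Nonempty)
        = N' ∪ s.powerset.image (insert a) := by
      rw [Finset.powerset_insert, Finset.filter_union, hN']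
      congr 1
      apply Finset.filter_true_of_mem
      intro S hS
      obtain ⟨T, _, rfl⟩ := Finset.mem_image.1 hS
      exact insert_nonempty a T
    have hdisj : Disjoint N' (s.powerset.image (insert a)) := by
      rw [Finset.disjoint_left]
      intro S hS hS'
      obtain ⟨T, _, rfl⟩ := Finset.mem_image.1 hS'
      exact ha ((hN'sub _ hS).1 (Finset.mem_insert_self a T))
    have hinj : ∀ T₁ ∈ s.powerset, ∀ T₂ ∈ s.powerset, insert a T₁ = insert a T₂ → T₁ = T₂ := by
      intro T₁ h₁ T₂ h₂ h
      have ha₁ : a ∉ T₁ := fun hx => ha (Finset.mem_powerset.1 h₁ hx)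
      have ha₂ : a ∉ T₂ := fun hx => ha (Finset.mem_powerset.1 h₂ hx)
      rw [← Finset.erase_insert ha₁, ← Finset.erase_insert ha₂, h]
    set invX := ∏ S ∈ N', (1 - v' S * ∏ i ∈ S, α i) with hinvX
    have hXinv : (∏ S ∈ N', (1 + v' S * ∏ i ∈ S, α i)) * invX = 1 := by
      rw [hinvX, ← Finset.prod_mul_distrib]
      apply Finset.prod_eq_one
      intro S hS
      have h2 := prod_sq_zero hα (hN'sub S hS).2
      linear_combination (-(v' S ^ 2)) * h2
    set Y := ∑ T ∈ s.powerset, w (insert a T) * ∏ i ∈ T, α i with hY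
    have hYQ : Y ∈ Q := by
      apply Submodule.sum_mem
      intro T hT
      have : w (insert a T) * ∏ i ∈ T, α i = w (insert a T) • ∏ i ∈ T, α i := rfl
      rw [this]
      exact Submodule.smul_mem _ _
        (Submodule.subset_span ⟨T, Finset.mem_powerset.1 hT, rfl⟩)
    have h1Q : (1 : A) ∈ Q := Submodule.subset_span ⟨∅, by simp, by simp⟩
    have hinvXQ : invX ∈ Q := by
      rw [hinvX]
      apply Finset.prod_induction _ (· ∈ Q) (fun _ _ => span_mul_mem hα s) h1Q
      intro S hS
      have : (1 : A) - v' S * ∏ i ∈ S, α i = 1 - v' S • ∏ i ∈ S, α i := rfl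
      rw [this]
      exact Submodule.sub_mem _ h1Q
        (Submodule.smul_mem _ _ (Submodule.subset_span ⟨S, (hN'sub S hS).1, rfl⟩))
    obtain ⟨c, hc⟩ := span_extract s (span_mul_mem hα s hinvXQ hYQ)
    -- the new coefficient function
    refine ⟨fun S => if a ∈ S then c (S.erase a) else v' S, ?_⟩
    rw [hdecomp, Finset.sum_union hdisj, Finset.prod_union hdisj]
    -- first product has the same factors as the IH product
    have hP1 : ∏ S ∈ N', (1 + (if a ∈ S then c (S.erase a) else v' S) * ∏ i ∈ S, α i)
        = ∏ S ∈ N', (1 + v' S * ∏ i ∈ S, α i) := by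
      apply Finset.prod_congr rfl
      intro S hS
      have : a ∉ S := fun hx => ha ((hN'sub S hS).1 hx)
      rw [if_neg this]
    -- sum over image
    have hsum2 : ∑ S ∈ s.powerset.image (insert a), w S * ∏ i ∈ S, α i
        = α a * Y := by
      rw [Finset.sum_image hinj, hY, Finset.mul_sum]
      apply Finset.sum_congr rfl
      intro T hT
      have haT : a ∉ T := fun hx => ha (Finset.mem_powerset.1 hT hx)
      rw [Finset.prod_insert haT]; ring
    -- product over image
    have hP2 : ∏ S ∈ s.powerset.image (insert a),
        (1 + (if a ∈ S then c (S.erase a) else v' S) * ∏ i ∈ S, α i)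
        = 1 + (invX * Y) * α a := by
      rw [Finset.prod_image hinj]
      have h3 : ∀ T ∈ s.powerset,
          (1 + (if a ∈ insert a T then c ((insert a T).erase a) else v' (insert a T))
            * ∏ i ∈ insert a T, α i)
          = 1 + (c T * ∏ i ∈ T, α i) * α a := by
        intro T hT
        have haT : a ∉ T := fun hx => ha (Finset.mem_powerset.1 hT hx)
        rw [if_pos (Finset.mem_insert_self a T), Finset.erase_insert haT,
          Finset.prod_insert haT]
        ring
      rw [Finset.prod_congr rfl h3,
        prod_one_add_mul_sq_zero (hα a) s.powerset (fun T => c T * ∏ i ∈ T, α i), ← hc]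
    rw [hP1, hP2, hsum2]
    linear_combination hv' - (α a * Y) * hXinv

/-- Step (4.1) of the proof of Lemma 4.3: any element of the form
1 + Σ_{∅≠S} w_S·α_S (with each αᵢ square-zero) factors as a product
of elementary factors 1 + v_S·α_S. -/
theorem quotient_products_elementary_factorization
    {A : Type*} [CommRing A] (n : ℕ) (α : Fin n → A)
    (hα : ∀ i, α i ^ 2 = 0) (w : Finset (Fin n) → A) :
    ∃ v : Finset (Fin n) → A,
      1 + ∑ S ∈ Finset.univ.filter (fun S : Finset (Fin n) => S.Nonempty),
            w S * ∏ i ∈ S, α i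
      = ∏ S ∈ Finset.univ.filter (fun S : Finset (Fin n) => S.Nonempty),
            (1 + v S * ∏ i ∈ S, α i) := by
  have h := key_lemma α hα Finset.univ w
  rwa [Finset.powerset_univ] at h
end

section
/- Let k be a commutative ring, A an associative unital k-algebra, and d, d' : A → A derivations with d∘d = 0, d'∘d' = 0 and d∘d' = d'∘d. Then the k-bilinear operation x∗y := x·y + d(x)·d'(y) is an associative product on A, and 1 is a two-sided unit for ∗. -/
/-- Algebraic model of Proposition 3.1: twisting an associative unital product
by a pair of square-zero, commuting derivations yields an associative product
with the same unit. -/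
theorem twisted_product_associative_unital
    {k A : Type*} [CommRing k] [Ring A] [Algebra k A]
    (d d' : A →ₗ[k] A)
    (hd_leib : ∀ x y : A, d (x * y) = d x * y + x * d y)
    (hd'_leib : ∀ x y : A, d' (x * y) = d' x * y + x * d' y)
    (hdd : ∀ x : A, d (d x) = 0)
    (hd'd' : ∀ x : A, d' (d' x) = 0)
    (hcomm : ∀ x : A, d (d' x) = d' (d x))
    (mul' : A → A → A)
    (hmul' : ∀ x y : A, mul' x y = x * y + d x * d' y) :
    (∀ x y z : A, mul' (mul' x y) z = mul' x (mul' y z)) ∧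
    (∀ x : A, mul' x 1 = x) ∧ (∀ x : A, mul' 1 x = x) := by
  have hd1 : d 1 = 0 := by
    have h := hd_leib 1 1
    simp only [one_mul, mul_one] at h
    exact (left_eq_add.mp h)
  have hd'1 : d' 1 = 0 := by
    have h := hd'_leib 1 1
    simp only [one_mul, mul_one] at h
    exact (left_eq_add.mp h)
  refine ⟨?_, ?_, ?_⟩
  · intro x y z
    simp only [hmul', map_add, hd_leib, hd'_leib, hdd, hd'd', hcomm, add_mul, mul_add,
      zero_mul, mul_zero, add_zero, zero_add, mul_assoc]
    abel
  · intro x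
    simp [hmul', hd'1]
  · intro x
    simp [hmul', hd1]
end

section
/- Let k be a commutative ring, A an associative unital k-algebra, and d, d' : A → A derivations with d∘d = 0, d'∘d' = 0 and d∘d' = d'∘d; let ∗ be the twisted product x∗y := x·y + d(x)·d'(y). If e : A → A is any derivation of A satisfying e∘d = d∘e and e∘d' = d'∘e, then e is also a derivation for ∗, i.e. e(x∗y) = e(x)∗y + x∗e(y) for all x, y ∈ A. In particular, d and d' are themselves derivations for ∗. -/
/-- Algebraic model of the independence of derivations from the product:
a derivation commuting with d and d' is also a derivation for the twisted
product x∗y = x·y + d(x)·d'(y); in particular d and d' themselves are. -/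
theorem derivation_for_twisted_product
    {k A : Type*} [CommRing k] [Ring A] [Algebra k A]
    (d d' e : A →ₗ[k] A)
    (hd_leib : ∀ x y : A, d (x * y) = d x * y + x * d y)
    (hd'_leib : ∀ x y : A, d' (x * y) = d' x * y + x * d' y)
    (he_leib : ∀ x y : A, e (x * y) = e x * y + x * e y)
    (hdd : ∀ x : A, d (d x) = 0)
    (hd'd' : ∀ x : A, d' (d' x) = 0)
    (hcomm : ∀ x : A, d (d' x) = d' (d x))
    (hed : ∀ x : A, e (d x) = d (e x))
    (hed' : ∀ x : A, e (d' x) = d' (e x))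
    (mul' : A → A → A)
    (hmul' : ∀ x y : A, mul' x y = x * y + d x * d' y) :
    (∀ x y : A, e (mul' x y) = mul' (e x) y + mul' x (e y)) ∧
    (∀ x y : A, d (mul' x y) = mul' (d x) y + mul' x (d y)) ∧
    (∀ x y : A, d' (mul' x y) = mul' (d' x) y + mul' x (d' y)) := by
  refine ⟨fun x y => ?_, fun x y => ?_, fun x y => ?_⟩
  · simp only [hmul', map_add, he_leib, hed, hed']
    abel
  · simp only [hmul', map_add, hd_leib, hdd, hcomm, zero_mul]
    abel
  · simp only [hmul', map_add, hd'_leib, hd'd', ← hcomm, mul_zero]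
    abel
end

section
/- Let k be a commutative ring, A an associative unital k-algebra, and let d₁, …, d_m and d'₁, …, d'_m be derivations of A such that all 2m of these maps pairwise commute under composition and each composes with itself to zero (dᵢ∘dᵢ = 0 and d'ᵢ∘d'ᵢ = 0 for all i). For S ⊆ {1, …, m} let d_S denote the composite of the dᵢ with i ∈ S (the order is immaterial since they commute), and similarly d'_S. Then the k-bilinear operation x∗y := Σ_{S⊆{1,…,m}} d_S(x) · d'_S(y) is an associative product on A with two-sided unit 1. -/
/-- Algebraic model of Lemma 4.2: given families d₁,…,d_m and d'₁,…,d'_m of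
pairwise-commuting square-zero derivations, with D S (resp. D' S) the composite
of the dᵢ (resp. d'ᵢ) for i ∈ S, the operation
x∗y = Σ_{S⊆{1,…,m}} (D S x)·(D' S y) is an associative product with unit 1. -/
theorem multi_twisted_product_associative_unital
    {k A : Type*} [CommRing k] [Ring A] [Algebra k A] (m : ℕ)
    (d d' : Fin m → (A →ₗ[k] A))
    (hd_leib : ∀ i (x y : A), d i (x * y) = d i x * y + x * d i y)
    (hd'_leib : ∀ i (x y : A), d' i (x * y) = d' i x * y + x * d' i y)
    (hsq : ∀ i (x : A), d i (d i x) = 0)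
    (hsq' : ∀ i (x : A), d' i (d' i x) = 0)
    (hcomm_dd : ∀ i j (x : A), d i (d j x) = d j (d i x))
    (hcomm_d'd' : ∀ i j (x : A), d' i (d' j x) = d' j (d' i x))
    (hcomm_dd' : ∀ i j (x : A), d i (d' j x) = d' j (d i x))
    (D D' : Finset (Fin m) → (A →ₗ[k] A))
    (hD0 : D ∅ = LinearMap.id) (hD'0 : D' ∅ = LinearMap.id)
    (hDins : ∀ i S, i ∉ S → D (insert i S) = (d i).comp (D S))
    (hD'ins : ∀ i S, i ∉ S → D' (insert i S) = (d' i).comp (D' S))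
    (mul' : A → A → A)
    (hmul' : ∀ x y : A, mul' x y = ∑ S : Finset (Fin m), D S x * D' S y) :
    (∀ x y z : A, mul' (mul' x y) z = mul' x (mul' y z)) ∧
    (∀ x : A, mul' x 1 = x) ∧ (∀ x : A, mul' 1 x = x) := by
  classical
  -- derivations kill 1
  have hd1 : ∀ i, d i (1 : A) = 0 := by
    intro i
    have h := hd_leib i 1 1
    simp only [mul_one, one_mul] at h
    exact (left_eq_add.mp h)
  have hd'1 : ∀ i, d' i (1 : A) = 0 := by
    intro i
    have h := hd'_leib i 1 1
    simp only [mul_one, one_mul] at h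
    exact (left_eq_add.mp h)
  -- value of D, D' on 1
  have hD1 : ∀ S : Finset (Fin m), D S (1 : A) = if S = ∅ then 1 else 0 := by
    intro S
    induction S using Finset.induction_on with
    | empty => simp [hD0]
    | @insert j T hj ih =>
      rw [hDins _ _ hj, LinearMap.comp_apply, ih]
      by_cases h : T = ∅ <;> simp [h, hd1]
  have hD'1 : ∀ S : Finset (Fin m), D' S (1 : A) = if S = ∅ then 1 else 0 := by
    intro S
    induction S using Finset.induction_on with
    | empty => simp [hD'0]
    | @insert j T hj ih =>
      rw [hD'ins _ _ hj, LinearMap.comp_apply, ih]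
      by_cases h : T = ∅ <;> simp [h, hd'1]
  -- single derivations commute with the composites
  have hcdD : ∀ i (S : Finset (Fin m)) (x : A), d i (D S x) = D S (d i x) := by
    intro i S x
    induction S using Finset.induction_on generalizing x with
    | empty => simp [hD0]
    | @insert j T hj ih =>
      rw [hDins _ _ hj, LinearMap.comp_apply, LinearMap.comp_apply, hcomm_dd, ih]
  have hcd'D' : ∀ i (S : Finset (Fin m)) (x : A), d' i (D' S x) = D' S (d' i x) := by
    intro i S x
    induction S using Finset.induction_on generalizing x with
    | empty => simp [hD'0]
    | @insert j T hj ih =>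
      rw [hD'ins _ _ hj, LinearMap.comp_apply, LinearMap.comp_apply, hcomm_d'd', ih]
  have hcdD' : ∀ i (S : Finset (Fin m)) (x : A), d i (D' S x) = D' S (d i x) := by
    intro i S x
    induction S using Finset.induction_on generalizing x with
    | empty => simp [hD'0]
    | @insert j T hj ih =>
      rw [hD'ins _ _ hj, LinearMap.comp_apply, LinearMap.comp_apply, hcomm_dd', ih]
  -- D' and D commute
  have hD'D : ∀ (S T : Finset (Fin m)) (x : A), D' S (D T x) = D T (D' S x) := by
    intro S T x
    induction T using Finset.induction_on generalizing x with
    | empty => simp [hD0]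
    | @insert j T' hj ih =>
      rw [hDins _ _ hj, LinearMap.comp_apply, LinearMap.comp_apply,
        ← hcdD' j S (D T' x), ih]
  -- a repeated derivation kills a composite
  have hdz : ∀ i (S : Finset (Fin m)) (x : A), i ∈ S → d i (D S x) = 0 := by
    intro i S x hi
    rw [← Finset.insert_erase hi, hDins i _ (Finset.notMem_erase i S),
      LinearMap.comp_apply]
    exact hsq i _
  have hd'z : ∀ i (S : Finset (Fin m)) (x : A), i ∈ S → d' i (D' S x) = 0 := by
    intro i S x hi
    rw [← Finset.insert_erase hi, hD'ins i _ (Finset.notMem_erase i S),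
      LinearMap.comp_apply]
    exact hsq' i _
  -- composition law for D, D'
  have hDcomp : ∀ (U T : Finset (Fin m)) (x : A),
      D U (D T x) = if Disjoint U T then D (U ∪ T) x else 0 := by
    intro U T x
    induction U using Finset.induction_on with
    | empty => simp [hD0]
    | @insert j U hj ih =>
      rw [hDins _ _ hj, LinearMap.comp_apply, ih]
      by_cases hUT : Disjoint U T
      · by_cases hjT : j ∈ T
        · have hnd : ¬ Disjoint (insert j U) T := by
            simp [Finset.disjoint_insert_left, hjT]
          rw [if_pos hUT, if_neg hnd]
          exact hdz j (U ∪ T) x (Finset.mem_union_right _ hjT)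
        · have h2 : Disjoint (insert j U) T := by
            rw [Finset.disjoint_insert_left]; exact ⟨hjT, hUT⟩
          have hjUT : j ∉ U ∪ T := by simp [hj, hjT]
          rw [if_pos hUT, if_pos h2, Finset.insert_union, hDins j (U ∪ T) hjUT,
            LinearMap.comp_apply]
      · have hnd : ¬ Disjoint (insert j U) T := fun h =>
          hUT (h.mono_left (Finset.subset_insert _ _))
        rw [if_neg hUT, if_neg hnd, map_zero]
  have hD'comp : ∀ (U T : Finset (Fin m)) (x : A),
      D' U (D' T x) = if Disjoint U T then D' (U ∪ T) x else 0 := by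
    intro U T x
    induction U using Finset.induction_on with
    | empty => simp [hD'0]
    | @insert j U hj ih =>
      rw [hD'ins _ _ hj, LinearMap.comp_apply, ih]
      by_cases hUT : Disjoint U T
      · by_cases hjT : j ∈ T
        · have hnd : ¬ Disjoint (insert j U) T := by
            simp [Finset.disjoint_insert_left, hjT]
          rw [if_pos hUT, if_neg hnd]
          exact hd'z j (U ∪ T) x (Finset.mem_union_right _ hjT)
        · have h2 : Disjoint (insert j U) T := by
            rw [Finset.disjoint_insert_left]; exact ⟨hjT, hUT⟩
          have hjUT : j ∉ U ∪ T := by simp [hj, hjT]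
          rw [if_pos hUT, if_pos h2, Finset.insert_union, hD'ins j (U ∪ T) hjUT,
            LinearMap.comp_apply]
      · have hnd : ¬ Disjoint (insert j U) T := fun h =>
          hUT (h.mono_left (Finset.subset_insert _ _))
        rw [if_neg hUT, if_neg hnd, map_zero]
  -- Leibniz rule for the composites
  have hDleib : ∀ (S : Finset (Fin m)) (x y : A),
      D S (x * y) = ∑ T ∈ S.powerset, D T x * D (S \ T) y := by
    intro S
    induction S using Finset.induction_on with
    | empty => intro x y; simp [hD0]
    | @insert j S hj ih =>
      intro x y
      rw [hDins _ _ hj, LinearMap.comp_apply, ih, map_sum]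
      have step : ∀ T ∈ S.powerset, d j (D T x * D (S \ T) y)
          = D (insert j T) x * D (insert j S \ insert j T) y
            + D T x * D (insert j S \ T) y := by
        intro T hT
        rw [Finset.mem_powerset] at hT
        have hjT : j ∉ T := fun h => hj (hT h)
        have hjST : j ∉ S \ T := fun h => hj (Finset.mem_sdiff.mp h).1
        have e1 : insert j S \ insert j T = S \ T := by
          ext a
          simp only [Finset.mem_sdiff, Finset.mem_insert]
          constructor
          · rintro ⟨h1 | h1, h2⟩
            · exact absurd (Or.inl h1) h2
            · exact ⟨h1, fun h3 => h2 (Or.inr h3)⟩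
          · rintro ⟨h1, h2⟩
            exact ⟨Or.inr h1, fun h3 => by
              rcases h3 with h3 | h3
              · exact hj (h3 ▸ h1)
              · exact h2 h3⟩
        have e2 : insert j S \ T = insert j (S \ T) :=
          Finset.insert_sdiff_of_notMem _ hjT
        rw [hd_leib, e1, e2, hDins _ _ hjT, hDins _ _ hjST, LinearMap.comp_apply,
          LinearMap.comp_apply]
      rw [Finset.sum_congr rfl step, Finset.sum_add_distrib, Finset.powerset_insert,
        Finset.sum_union, Finset.sum_image]
      · rw [add_comm]
      · intro T hT T' hT' h
        rw [Finset.mem_coe, Finset.mem_powerset] at hT hT'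
        have hjT : j ∉ T := fun hh => hj (hT hh)
        have hjT' : j ∉ T' := fun hh => hj (hT' hh)
        have := congrArg (Finset.erase · j) h
        simpa [Finset.erase_insert hjT, Finset.erase_insert hjT'] using this
      · rw [Finset.disjoint_left]
        intro T hT hT2
        rw [Finset.mem_powerset] at hT
        simp only [Finset.mem_image, Finset.mem_powerset] at hT2
        obtain ⟨T', _, rfl⟩ := hT2
        exact hj (hT (Finset.mem_insert_self j T'))
  have hD'leib : ∀ (S : Finset (Fin m)) (x y : A),
      D' S (x * y) = ∑ T ∈ S.powerset, D' T x * D' (S \ T) y := by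
    intro S
    induction S using Finset.induction_on with
    | empty => intro x y; simp [hD'0]
    | @insert j S hj ih =>
      intro x y
      rw [hD'ins _ _ hj, LinearMap.comp_apply, ih, map_sum]
      have step : ∀ T ∈ S.powerset, d' j (D' T x * D' (S \ T) y)
          = D' (insert j T) x * D' (insert j S \ insert j T) y
            + D' T x * D' (insert j S \ T) y := by
        intro T hT
        rw [Finset.mem_powerset] at hT
        have hjT : j ∉ T := fun h => hj (hT h)
        have hjST : j ∉ S \ T := fun h => hj (Finset.mem_sdiff.mp h).1
        have e1 : insert j S \ insert j T = S \ T := by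
          ext a
          simp only [Finset.mem_sdiff, Finset.mem_insert]
          constructor
          · rintro ⟨h1 | h1, h2⟩
            · exact absurd (Or.inl h1) h2
            · exact ⟨h1, fun h3 => h2 (Or.inr h3)⟩
          · rintro ⟨h1, h2⟩
            exact ⟨Or.inr h1, fun h3 => by
              rcases h3 with h3 | h3
              · exact hj (h3 ▸ h1)
              · exact h2 h3⟩
        have e2 : insert j S \ T = insert j (S \ T) :=
          Finset.insert_sdiff_of_notMem _ hjT
        rw [hd'_leib, e1, e2, hD'ins _ _ hjT, hD'ins _ _ hjST, LinearMap.comp_apply,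
          LinearMap.comp_apply]
      rw [Finset.sum_congr rfl step, Finset.sum_add_distrib, Finset.powerset_insert,
        Finset.sum_union, Finset.sum_image]
      · rw [add_comm]
      · intro T hT T' hT' h
        rw [Finset.mem_coe, Finset.mem_powerset] at hT hT'
        have hjT : j ∉ T := fun hh => hj (hT hh)
        have hjT' : j ∉ T' := fun hh => hj (hT' hh)
        have := congrArg (Finset.erase · j) h
        simpa [Finset.erase_insert hjT, Finset.erase_insert hjT'] using this
      · rw [Finset.disjoint_left]
        intro T hT hT2
        rw [Finset.mem_powerset] at hT
        simp only [Finset.mem_image, Finset.mem_powerset] at hT2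
        obtain ⟨T', _, rfl⟩ := hT2
        exact hj (hT (Finset.mem_insert_self j T'))
  -- reindexing lemma: sum over (S, U ⊆ S) equals sum over disjoint pairs
  have key : ∀ g : Finset (Fin m) → Finset (Fin m) → A,
      (∑ S : Finset (Fin m), ∑ U ∈ S.powerset, g U (S \ U))
        = ∑ Q : Finset (Fin m), ∑ R : Finset (Fin m),
            if Disjoint Q R then g Q R else 0 := by
    intro g
    have h1 : ∀ Q : Finset (Fin m),
        (∑ R : Finset (Fin m), if Disjoint Q R then g Q R else 0)
          = ∑ R ∈ Finset.univ.filter (fun R => Disjoint Q R), g Q R := by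
      intro Q; rw [Finset.sum_filter]
    simp only [h1]
    rw [Finset.sum_sigma', Finset.sum_sigma']
    refine Finset.sum_bij' (fun p _ => ⟨p.2, p.1 \ p.2⟩) (fun p _ => ⟨p.1 ∪ p.2, p.1⟩)
      ?_ ?_ ?_ ?_ ?_
    · rintro ⟨S, U⟩ hp
      simp only [Finset.mem_sigma, Finset.mem_powerset, Finset.mem_univ, true_and] at hp ⊢
      simp [Finset.mem_filter, Finset.disjoint_sdiff]
    · rintro ⟨Q, R⟩ hp
      exact Finset.mem_sigma.mpr ⟨Finset.mem_univ _,
        Finset.mem_powerset.mpr Finset.subset_union_left⟩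
    · rintro ⟨S, U⟩ hp
      simp only [Finset.mem_sigma, Finset.mem_powerset, Finset.mem_univ, true_and] at hp
      simp [Finset.union_sdiff_of_subset hp]
    · rintro ⟨Q, R⟩ hp
      simp only [Finset.mem_sigma, Finset.mem_univ, Finset.mem_filter, true_and] at hp
      simp [Finset.union_sdiff_cancel_left hp]
    · rintro ⟨S, U⟩ hp
      rfl
  refine ⟨?_, ?_, ?_⟩
  · -- associativity
    intro x y z
    -- left-hand side in canonical form
    have L : mul' (mul' x y) z
        = ∑ Q : Finset (Fin m), ∑ R : Finset (Fin m), ∑ T : Finset (Fin m),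
            if Disjoint Q R then
              (if Disjoint Q T then D (Q ∪ T) x * D R (D' T y) * D' (Q ∪ R) z else 0)
            else 0 := by
      have L1 : mul' (mul' x y) z
          = ∑ S : Finset (Fin m), ∑ U ∈ S.powerset, (∑ T : Finset (Fin m),
              (if Disjoint U T then D (U ∪ T) x else 0) * D (S \ U) (D' T y)
                * D' (U ∪ (S \ U)) z) := by
        rw [hmul']
        refine Finset.sum_congr rfl fun S _ => ?_
        rw [hmul' x y, map_sum, Finset.sum_mul]
        simp only [hDleib, Finset.sum_mul]
        rw [Finset.sum_comm]
        refine Finset.sum_congr rfl fun U hU => Finset.sum_congr rfl fun T _ => ?_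
        rw [Finset.mem_powerset] at hU
        rw [hDcomp, Finset.union_sdiff_of_subset hU]
      rw [L1, key (fun Q R => ∑ T : Finset (Fin m),
        (if Disjoint Q T then D (Q ∪ T) x else 0) * D R (D' T y) * D' (Q ∪ R) z)]
      refine Finset.sum_congr rfl fun Q _ => Finset.sum_congr rfl fun R _ => ?_
      by_cases h : Disjoint Q R
      · rw [if_pos h]
        refine Finset.sum_congr rfl fun T _ => ?_
        rw [if_pos h, ite_mul, ite_mul, zero_mul, zero_mul]
      · rw [if_neg h]
        rw [Finset.sum_congr rfl (fun T _ => if_neg h), Finset.sum_const_zero]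
    -- right-hand side in canonical form
    have R : mul' x (mul' y z)
        = ∑ V : Finset (Fin m), ∑ R : Finset (Fin m), ∑ T : Finset (Fin m),
            if Disjoint V R then
              (if Disjoint R T then D (V ∪ R) x * (D T (D' V y) * D' (R ∪ T) z) else 0)
            else 0 := by
      have R1 : mul' x (mul' y z)
          = ∑ S : Finset (Fin m), ∑ V ∈ S.powerset, (∑ T : Finset (Fin m),
              D (V ∪ (S \ V)) x * (D T (D' V y)
                * (if Disjoint (S \ V) T then D' ((S \ V) ∪ T) z else 0))) := by
        rw [hmul']
        refine Finset.sum_congr rfl fun S _ => ?_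
        rw [hmul' y z, map_sum, Finset.mul_sum]
        simp only [hD'leib, Finset.mul_sum]
        rw [Finset.sum_comm]
        refine Finset.sum_congr rfl fun V hV => Finset.sum_congr rfl fun T _ => ?_
        rw [Finset.mem_powerset] at hV
        rw [hD'comp, Finset.union_sdiff_of_subset hV, hD'D]
      rw [R1, key (fun V R => ∑ T : Finset (Fin m),
        D (V ∪ R) x * (D T (D' V y) * (if Disjoint R T then D' (R ∪ T) z else 0)))]
      refine Finset.sum_congr rfl fun V _ => Finset.sum_congr rfl fun R _ => ?_
      by_cases h : Disjoint V R
      · rw [if_pos h]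
        refine Finset.sum_congr rfl fun T _ => ?_
        rw [if_pos h]
        by_cases h2 : Disjoint R T
        · rw [if_pos h2, if_pos h2]
        · rw [if_neg h2, if_neg h2, mul_zero, mul_zero]
      · rw [if_neg h]
        rw [Finset.sum_congr rfl (fun T _ => if_neg h), Finset.sum_const_zero]
    rw [L, R]
    -- reorder the triple sums and match terms
    rw [show (∑ Q : Finset (Fin m), ∑ R : Finset (Fin m), ∑ T : Finset (Fin m),
          if Disjoint Q R then
            (if Disjoint Q T then D (Q ∪ T) x * D R (D' T y) * D' (Q ∪ R) z else 0)
          else 0)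
        = ∑ T : Finset (Fin m), ∑ Q : Finset (Fin m), ∑ R : Finset (Fin m),
          if Disjoint Q R then
            (if Disjoint Q T then D (Q ∪ T) x * D R (D' T y) * D' (Q ∪ R) z else 0)
          else 0 from by
      rw [show ∀ F : Finset (Fin m) → Finset (Fin m) → Finset (Fin m) → A,
          (∑ Q : Finset (Fin m), ∑ R : Finset (Fin m), ∑ T : Finset (Fin m), F Q R T)
            = ∑ Q : Finset (Fin m), ∑ T : Finset (Fin m), ∑ R : Finset (Fin m), F Q R T
          from fun F => Finset.sum_congr rfl fun Q _ => Finset.sum_comm]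
      exact Finset.sum_comm]
    refine Finset.sum_congr rfl fun T _ => Finset.sum_congr rfl fun Q _ =>
      Finset.sum_congr rfl fun R _ => ?_
    have hcom : Disjoint T Q ↔ Disjoint Q T := disjoint_comm
    rw [Finset.union_comm T Q, mul_assoc]
    by_cases h1 : Disjoint Q R <;> by_cases h2 : Disjoint Q T
    · rw [if_pos h1, if_pos h2, if_pos (hcom.mpr h2), if_pos h1]
    · rw [if_pos h1, if_neg h2, if_neg (fun h => h2 (hcom.mp h))]
    · rw [if_neg h1, if_pos (hcom.mpr h2), if_neg h1]
    · rw [if_neg h1, if_neg (fun h => h2 (hcom.mp h))]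
  · -- right unit
    intro x
    rw [hmul', Fintype.sum_eq_single (∅ : Finset (Fin m))]
    · simp [hD0, hD'0]
    · intro S hS
      rw [hD'1, if_neg hS, mul_zero]
  · -- left unit
    intro x
    rw [hmul', Fintype.sum_eq_single (∅ : Finset (Fin m))]
    · simp [hD0, hD'0]
    · intro S hS
      rw [hD1, if_neg hS, zero_mul]
end

section
/- Let k be a commutative ring and A an associative unital k-algebra in which 2 = 0, and let d, d' : A → A be derivations with d∘d = 0, d'∘d' = 0 and d∘d' = d'∘d. Define x∗y := x·y + d(x)·d'(y) + d'(x)·d(y) + (d∘d')(x)·(d∘d')(y). Then ∗ is an associative product on A with unit 1, and the k-linear map f = id_A + d∘d' satisfies f∘f = id_A and f(x·y) = f(x)∗f(y) for all x, y ∈ A; hence f is an algebra isomorphism from (A, ·) to (A, ∗). -/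
/-- Characteristic-2 algebraic model of Lemma 7.3: for square-zero commuting
derivations d, d' of an algebra A with 2 = 0, the operation
x∗y = x·y + d(x)·d'(y) + d'(x)·d(y) + (dd')(x)·(dd')(y) is an associative
unital product, and f = id + d∘d' is a self-inverse algebra isomorphism
from (A, ·) to (A, ∗). -/
theorem char_two_twist_multiplicative_equivalence
    {k A : Type*} [CommRing k] [Ring A] [Algebra k A]
    (h2 : (2 : A) = 0)
    (d d' : A →ₗ[k] A)
    (hd_leib : ∀ x y : A, d (x * y) = d x * y + x * d y)
    (hd'_leib : ∀ x y : A, d' (x * y) = d' x * y + x * d' y)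
    (hdd : ∀ x : A, d (d x) = 0)
    (hd'd' : ∀ x : A, d' (d' x) = 0)
    (hcomm : ∀ x : A, d (d' x) = d' (d x))
    (mul' : A → A → A)
    (hmul' : ∀ x y : A,
      mul' x y = x * y + d x * d' y + d' x * d y + d (d' x) * d (d' y))
    (f : A → A) (hf : ∀ x : A, f x = x + d (d' x)) :
    (∀ x y z : A, mul' (mul' x y) z = mul' x (mul' y z)) ∧
    (∀ x : A, mul' x 1 = x) ∧ (∀ x : A, mul' 1 x = x) ∧
    (∀ x : A, f (f x) = x) ∧
    (∀ x y : A, f (x * y) = mul' (f x) (f y)) := by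
  have two : ∀ a : A, a + a = 0 := fun a => by
    have h : a + a = 2 * a := (two_mul a).symm
    rw [h, h2, zero_mul]
  have hd1 : d 1 = 0 := by
    have h := hd_leib 1 1
    simp only [mul_one, one_mul] at h
    exact (left_eq_add.mp h)
  have hd'1 : d' 1 = 0 := by
    have h := hd'_leib 1 1
    simp only [mul_one, one_mul] at h
    exact (left_eq_add.mp h)
  have hdD : ∀ x : A, d (d (d' x)) = 0 := fun x => hdd (d' x)
  have hd'D : ∀ x : A, d' (d (d' x)) = 0 := fun x => by
    rw [← hcomm, hd'd', map_zero]
  have hDD : ∀ x : A, d (d' (d (d' x))) = 0 := fun x => by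
    rw [hd'D, map_zero]
  have twoN : ∀ a : A, (2 : ℕ) • a = 0 := fun a => by
    rw [two_nsmul]; exact two a
  have twoZ : ∀ a : A, (2 : ℤ) • a = 0 := fun a => by
    rw [two_zsmul]; exact two a
  have hdu : ∀ x y : A, d (mul' x y)
      = d x * y + x * d y + d x * d (d' y) + d (d' x) * d y := by
    intro x y
    rw [hmul']
    simp only [map_add, hd_leib, hdd, hdD, zero_mul, mul_zero, add_zero, zero_add]
  have hd'u : ∀ x y : A, d' (mul' x y)
      = d' x * y + x * d' y + d (d' x) * d' y + d' x * d (d' y) := by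
    intro x y
    rw [hmul']
    simp only [map_add, hd'_leib, hd'd', ← hcomm, hd'D, map_zero, zero_mul,
      mul_zero, add_zero, zero_add]
  have hDu : ∀ x y : A, d (d' (mul' x y))
      = d (d' x) * y + d' x * d y + d x * d' y + x * d (d' y) := by
    intro x y
    rw [hd'u]
    simp only [map_add, hd_leib, hdd, hdD, hDD, zero_mul, mul_zero, add_zero,
      zero_add]
    abel_nf
    simp only [twoN, twoZ, add_zero, zero_add]
  have hDmul : ∀ x y : A, d (d' (x * y))
      = d (d' x) * y + d' x * d y + d x * d' y + x * d (d' y) := by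
    intro x y
    rw [hd'_leib, map_add, hd_leib, hd_leib]
    abel
  refine ⟨?_, ?_, ?_, ?_, ?_⟩
  · intro x y z
    rw [hmul' (mul' x y) z, hmul' x (mul' y z)]
    rw [hDu, hDu]
    simp only [hdu, hd'u]
    rw [hmul' x y, hmul' y z]
    simp only [mul_add, add_mul, mul_assoc]
    abel
  · intro x
    rw [hmul']
    simp only [hd1, hd'1, map_zero, mul_zero, mul_one, add_zero]
  · intro x
    rw [hmul']
    simp only [hd1, hd'1, map_zero, zero_mul, one_mul, add_zero]
  · intro x
    rw [hf (f x), hf x]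
    simp only [map_add, hDD, add_zero]
    rw [add_assoc, two, add_zero]
  · intro x y
    rw [hf (x * y), hf x, hf y, hmul']
    simp only [map_add, hdD, hd'D, hDD, add_zero, hDmul]
    simp only [mul_add, add_mul]
    abel_nf
    simp only [twoN, twoZ, add_zero, zero_add]
end
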